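/- Let k, m ∈ ℕ with m ≥ 1, and let a_2, a_3 : (0,∞) → ℝ with a_2 twice continuously differentiable and a_3 continuously differentiable. If a_2 − r a_3′ = (2k+m+2)a_3 and a_3 + a_2′/r = 0 on (0,∞), then a_2 satisfies the Bessel-type ordinary differential equation r a_2″ + (2k+m+1) a_2′ + r a_2 = 0 on (0,∞). -/

import Mathlib

noncomputable section

open scoped BigOperators

/-- The `ℓ¹`-norm with respect to a Hamel basis.  On a finite-dimensional real
vector space (such as the Clifford algebra `ℝ_{0,m}`) the induced topology is
the canonical one. -/
def hamelNorm (V : Type) [AddCommGroup V] [Module ℝ V] : AddGroupNorm V where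
  toFun v := ∑ i ∈ ((Module.Basis.ofVectorSpace ℝ V).repr v).support,
      |(Module.Basis.ofVectorSpace ℝ V).repr v i|
  map_zero' := by simp
  add_le' := by
    intro x y
    classical
    set b := Module.Basis.ofVectorSpace ℝ V
    have hrepr : b.repr (x + y) = b.repr x + b.repr y := map_add _ _ _
    calc ∑ i ∈ (b.repr (x + y)).support, |b.repr (x + y) i|
        ≤ ∑ i ∈ (b.repr x).support ∪ (b.repr y).support, |b.repr (x + y) i| := by
          refine Finset.sum_le_sum_of_subset_of_nonneg ?_ (fun i _ _ => abs_nonneg _)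
          rw [hrepr]; exact Finsupp.support_add
      _ ≤ ∑ i ∈ (b.repr x).support ∪ (b.repr y).support, (|b.repr x i| + |b.repr y i|) := by
          refine Finset.sum_le_sum fun i _ => ?_
          rw [hrepr, Finsupp.add_apply]; exact abs_add_le _ _
      _ = (∑ i ∈ (b.repr x).support ∪ (b.repr y).support, |b.repr x i|)
            + ∑ i ∈ (b.repr x).support ∪ (b.repr y).support, |b.repr y i| :=
          Finset.sum_add_distrib
      _ = (∑ i ∈ (b.repr x).support, |b.repr x i|)
            + ∑ i ∈ (b.repr y).support, |b.repr y i| := by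
          rw [← Finset.sum_subset Finset.subset_union_left
              (fun i _ hi => by simp [Finsupp.notMem_support_iff.mp hi]),
            ← Finset.sum_subset Finset.subset_union_right
              (fun i _ hi => by simp [Finsupp.notMem_support_iff.mp hi])]
  neg' := by
    intro x
    simp [map_neg]
  eq_zero_of_map_eq_zero' := by
    classical
    intro x hx
    set b := Module.Basis.ofVectorSpace ℝ V
    have h0 : b.repr x = 0 := by
      ext i
      by_cases hi : i ∈ (b.repr x).support
      · exact abs_eq_zero.mp
          ((Finset.sum_eq_zero_iff_of_nonneg (fun i _ => abs_nonneg _)).mp hx i hi)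
      · simpa using Finsupp.notMem_support_iff.mp hi
    exact b.repr.map_eq_zero_iff.mp h0

/-- The quadratic form `Q(v) = -‖v‖²` on `ℝ^m`. -/
def Qneg (m : ℕ) : QuadraticForm ℝ (EuclideanSpace ℝ (Fin m)) :=
  (QuadraticMap.weightedSumSquares ℝ fun _ : Fin m => (-1 : ℝ)).comp
    (WithLp.linearEquiv 2 ℝ (Fin m → ℝ)).toLinearMap

/-- The real Clifford algebra `ℝ_{0,m}`. -/
abbrev Cl (m : ℕ) := CliffordAlgebra (Qneg m)

/-- The canonical embedding `ι : ℝ^m → ℝ_{0,m}`. -/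
abbrev ιC (m : ℕ) : EuclideanSpace ℝ (Fin m) →ₗ[ℝ] Cl m := CliffordAlgebra.ι (Qneg m)

/-- The generators `e₁, …, e_m` of `ℝ_{0,m}`. -/
def eC (m : ℕ) (j : Fin m) : Cl m := ιC m (EuclideanSpace.single j 1)

noncomputable instance (m : ℕ) : NormedAddCommGroup (Cl m) :=
  (hamelNorm (Cl m)).toNormedAddCommGroup

noncomputable instance (m : ℕ) : NormedSpace ℝ (Cl m) where
  norm_smul_le a v := by
    classical
    have hv : ‖v‖ = ∑ i ∈ ((Module.Basis.ofVectorSpace ℝ (Cl m)).repr v).support,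
        |(Module.Basis.ofVectorSpace ℝ (Cl m)).repr v i| := rfl
    have hav : ‖a • v‖ = ∑ i ∈ ((Module.Basis.ofVectorSpace ℝ (Cl m)).repr (a • v)).support,
        |(Module.Basis.ofVectorSpace ℝ (Cl m)).repr (a • v) i| := rfl
    set b := Module.Basis.ofVectorSpace ℝ (Cl m)
    have hrepr : b.repr (a • v) = a • b.repr v := map_smul _ _ _
    rw [hav, hv, Real.norm_eq_abs]
    calc ∑ i ∈ (b.repr (a • v)).support, |b.repr (a • v) i|
        ≤ ∑ i ∈ (b.repr v).support, |b.repr (a • v) i| := by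
          refine Finset.sum_le_sum_of_subset_of_nonneg ?_ (fun i _ _ => abs_nonneg _)
          rw [hrepr]; exact Finsupp.support_smul
      _ = ∑ i ∈ (b.repr v).support, |a| * |b.repr v i| := by
          refine Finset.sum_congr rfl fun i _ => ?_
          rw [hrepr, Finsupp.smul_apply, smul_eq_mul, abs_mul]
      _ = |a| * ∑ i ∈ (b.repr v).support, |b.repr v i| := by rw [Finset.mul_sum]

/-- The Dirac operator acting from the left: `∂_x f = Σⱼ eⱼ (∂_{xⱼ} f)`. -/
def diracL (m : ℕ) (f : EuclideanSpace ℝ (Fin m) → Cl m) (x : EuclideanSpace ℝ (Fin m)) : Cl m :=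
  ∑ j, eC m j * fderiv ℝ f x (EuclideanSpace.single j 1)

/-- The Dirac operator acting from the right: `f ∂_x = Σⱼ (∂_{xⱼ} f) eⱼ`. -/
def diracR (m : ℕ) (f : EuclideanSpace ℝ (Fin m) → Cl m) (x : EuclideanSpace ℝ (Fin m)) : Cl m :=
  ∑ j, fderiv ℝ f x (EuclideanSpace.single j 1) * eC m j


/-- The last two radial equations imply the Bessel-type ODE
`r a₂″ + (2k + m + 1) a₂′ + r a₂ = 0`. -/
theorem bessel_ode_of_system (k m : ℕ) (hm : 1 ≤ m)
    (a₂ a₃ : ℝ → ℝ) (ha₂ : ContDiffOn ℝ 2 a₂ (Set.Ioi 0))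
    (ha₃ : ContDiffOn ℝ 1 a₃ (Set.Ioi 0))
    (h3 : ∀ r ∈ Set.Ioi (0 : ℝ),
      a₂ r - r * deriv a₃ r = (2 * (k : ℝ) + (m : ℝ) + 2) * a₃ r)
    (h4 : ∀ r ∈ Set.Ioi (0 : ℝ), a₃ r + deriv a₂ r / r = 0) :
    ∀ r ∈ Set.Ioi (0 : ℝ),
      r * deriv (deriv a₂) r + (2 * (k : ℝ) + (m : ℝ) + 1) * deriv a₂ r + r * a₂ r = 0 := by
  intro r hr
  have hr0 : (0 : ℝ) < r := hr
  have hopen : IsOpen (Set.Ioi (0 : ℝ)) := isOpen_Ioi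
  have hd2 : ContDiffOn ℝ 1 (deriv a₂) (Set.Ioi 0) :=
    ha₂.deriv_of_isOpen hopen (by norm_num)
  have hdiff2 : DifferentiableAt ℝ (deriv a₂) r :=
    (hd2.differentiableOn one_ne_zero r hr).differentiableAt (hopen.mem_nhds hr)
  have heq : a₃ =ᶠ[nhds r] fun x => -deriv a₂ x / x := by
    filter_upwards [hopen.mem_nhds hr] with x hx
    have h := h4 x hx
    rw [neg_div]
    linarith
  have hderiv3 : deriv a₃ r = deriv (fun x => -deriv a₂ x / x) r := heq.deriv_eq
  have hcomp : deriv (fun x => -deriv a₂ x / x) r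
      = (-(deriv (deriv a₂) r) * r - (-(deriv a₂ r)) * 1) / r ^ 2 := by
    have h : deriv (fun x => -deriv a₂ x / x) r = _ := deriv_div (c := fun x => -deriv a₂ x) (d := fun x : ℝ => x)
      hdiff2.neg differentiableAt_id (ne_of_gt hr0)
    simpa [deriv_neg] using h
  have h3r := h3 r hr
  have h4r := h4 r hr
  have ha3 : a₃ r = -deriv a₂ r / r := by rw [neg_div]; linarith
  rw [hcomp] at hderiv3
  rw [hderiv3, ha3] at h3r
  have hrne : r ≠ 0 := ne_of_gt hr0
  field_simp at h3r
  have key : r ^ 2 * (r * deriv (deriv a₂) r + (2 * (k : ℝ) + (m : ℝ) + 1) * deriv a₂ r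
      + r * a₂ r) = 0 := by linear_combination r ^ 2 * h3r
  have hr2 : (r : ℝ) ^ 2 ≠ 0 := pow_ne_zero _ hrne
  exact (mul_eq_zero.mp key).resolve_left hr2

end
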